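/- Let ξ be a centered real random variable with Eξ² = 1 and Eξ⁴ ≤ τ. Then P(ξ > 0) ≥ (2√3 − 3)/τ. -/

import Mathlib

open MeasureTheory ProbabilityTheory Real

lemma stmt5_ptwise (p : ℝ) :
    (2 * Real.sqrt 3 - 3) * (4 / 9) * (2 * p + 3 * p ^ 2 - p ^ 4) ≤
      (if 0 < p then (1 : ℝ) else 0) := by
  set c := Real.sqrt 3 with hcdef
  have hc : c ^ 2 = 3 := Real.sq_sqrt (by norm_num)
  have hc0 : 0 ≤ c := Real.sqrt_nonneg 3
  have hc1 : (3 : ℝ) / 2 ≤ c := by nlinarith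
  have hK : 0 ≤ 2 * c - 3 := by linarith
  split_ifs with hp
  · have key : 0 ≤ (2 * c - 3) * (4 / 9) *
        ((p - (1 + c) / 2) ^ 2 * ((p + (1 + c) / 2) ^ 2 + (c - 1))) := by
      apply mul_nonneg (by linarith)
      apply mul_nonneg (sq_nonneg _)
      have : (0:ℝ) ≤ (p + (1 + c) / 2) ^ 2 := sq_nonneg _
      linarith
    have hid : 1 - (2 * c - 3) * (4 / 9) * (2 * p + 3 * p ^ 2 - p ^ 4) =
        (2 * c - 3) * (4 / 9) *
          ((p - (1 + c) / 2) ^ 2 * ((p + (1 + c) / 2) ^ 2 + (c - 1))) := by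
      linear_combination (-1/4 - (4/3) * p - (2/3) * p ^ 2 - (1/18) * c + (8/9) * p * c
        + (4/9) * p ^ 2 * c - (13/36) * c ^ 2 - (1/18) * c ^ 3) * hc
    linarith
  · push_neg at hp
    have key : 0 ≤ (-p) * ((-p - 1) ^ 2 * (2 - p)) := by
      apply mul_nonneg (by linarith)
      apply mul_nonneg (sq_nonneg _)
      linarith
    have hbr : 2 * p + 3 * p ^ 2 - p ^ 4 ≤ 0 := by nlinarith [key]
    have h49 : 0 ≤ (2 * c - 3) * (4 / 9) := by linarith
    exact mul_nonpos_of_nonneg_of_nonpos h49 hbr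

theorem stmt5 {Ω : Type*} [MeasureSpace Ω] [IsProbabilityMeasure (ℙ : Measure Ω)]
    (ξ : Ω → ℝ) (hmeas : Measurable ξ)
    (hint : Integrable ξ) (hint4 : Integrable (fun ω => (ξ ω) ^ 4))
    (hmean : (∫ ω, ξ ω) = 0) (h2 : (∫ ω, (ξ ω) ^ 2) = 1)
    (τ : ℝ) (h4 : (∫ ω, (ξ ω) ^ 4) ≤ τ) :
    ENNReal.ofReal ((2 * Real.sqrt 3 - 3) / τ) ≤ ℙ {ω | 0 < ξ ω} := by
  set c := Real.sqrt 3 with hcdef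
  have hc : c ^ 2 = 3 := Real.sq_sqrt (by norm_num)
  have hc0 : 0 ≤ c := Real.sqrt_nonneg 3
  have hK : 0 ≤ 2 * c - 3 := by nlinarith
  -- integrability of ξ²
  have hint2 : Integrable (fun ω => (ξ ω) ^ 2) := by
    apply ((hint4.add (integrable_const 1)).mono'
      ((hmeas.pow_const 2).aestronglyMeasurable))
    filter_upwards with ω
    have h1 : ‖(ξ ω) ^ 2‖ = (ξ ω) ^ 2 := by
      rw [Real.norm_eq_abs]; exact abs_of_nonneg (sq_nonneg _)
    rw [h1]
    simp only [Pi.add_apply]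
    nlinarith [sq_nonneg ((ξ ω) ^ 2 - 1)]
  -- τ ≥ 1
  have hI4 : (1 : ℝ) ≤ ∫ ω, (ξ ω) ^ 4 := by
    have h0 : 0 ≤ ∫ ω, ((ξ ω) ^ 2 - 1) ^ 2 := integral_nonneg fun ω => sq_nonneg _
    have heq : (fun ω => ((ξ ω) ^ 2 - 1) ^ 2)
        = fun ω => ((ξ ω) ^ 4 - 2 * (ξ ω) ^ 2) + 1 := by
      funext ω; ring
    rw [heq] at h0
    have i1 : Integrable (fun ω => (ξ ω) ^ 4 - 2 * (ξ ω) ^ 2) := hint4.sub (hint2.const_mul 2)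
    rw [integral_add i1 (integrable_const 1),
      integral_sub hint4 (hint2.const_mul 2), integral_const_mul, h2] at h0
    simp [measure_univ] at h0
    linarith
  have hτ : (1 : ℝ) ≤ τ := le_trans hI4 h4
  have hτ0 : (0 : ℝ) < τ := by linarith
  -- σ := sqrt (2τ/3)
  set σ := Real.sqrt (2 * τ / 3) with hσdef
  have hσ2 : σ ^ 2 = 2 * τ / 3 := Real.sq_sqrt (by linarith)
  have hσ0 : 0 < σ := Real.sqrt_pos.mpr (by linarith)
  set A := {ω | 0 < ξ ω} with hAdef
  have hA : MeasurableSet A := measurableSet_lt measurable_const hmeas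
  -- coefficients
  set c₁ := (2 * c - 3) * (8 / 9) / σ with hc₁
  set c₂ := (2 * c - 3) * (4 / 3) / σ ^ 2 with hc₂
  set c₃ := -((2 * c - 3) * (4 / 9)) / σ ^ 4 with hc₃
  have hintL : Integrable (fun ω => c₁ * ξ ω + (c₂ * (ξ ω) ^ 2 + c₃ * (ξ ω) ^ 4)) :=
    (hint.const_mul c₁).add ((hint2.const_mul c₂).add (hint4.const_mul c₃))
  have hmono : (∫ ω, (c₁ * ξ ω + (c₂ * (ξ ω) ^ 2 + c₃ * (ξ ω) ^ 4)))
      ≤ ∫ ω, A.indicator (fun _ => (1 : ℝ)) ω := by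
    apply integral_mono hintL ((integrable_const 1).indicator hA)
    intro ω
    show c₁ * ξ ω + (c₂ * (ξ ω) ^ 2 + c₃ * (ξ ω) ^ 4) ≤ A.indicator (fun _ => (1 : ℝ)) ω
    have hpt := stmt5_ptwise (ξ ω / σ)
    have hform : c₁ * ξ ω + (c₂ * (ξ ω) ^ 2 + c₃ * (ξ ω) ^ 4)
        = (2 * c - 3) * (4 / 9) *
          (2 * (ξ ω / σ) + 3 * (ξ ω / σ) ^ 2 - (ξ ω / σ) ^ 4) := by
      rw [hc₁, hc₂, hc₃]
      field_simp
      ring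
    rw [hform]
    by_cases hω : ω ∈ A
    · have hξω : 0 < ξ ω := hω
      have : 0 < ξ ω / σ := div_pos hξω hσ0
      rw [if_pos this] at hpt
      simpa [Set.indicator_of_mem hω] using hpt
    · have hξω : ¬ (0 < ξ ω) := hω
      have : ¬ (0 < ξ ω / σ) :=
        not_lt.mpr (div_nonpos_iff.mpr (Or.inr ⟨not_lt.mp hξω, hσ0.le⟩))
      rw [if_neg this] at hpt
      simpa [Set.indicator_of_notMem hω] using hpt
  have hind : (∫ ω, A.indicator (fun _ => (1 : ℝ)) ω) = (ℙ A).toReal := by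
    rw [integral_indicator hA]
    simp
    rfl
  have hLHS : (∫ ω, (c₁ * ξ ω + (c₂ * (ξ ω) ^ 2 + c₃ * (ξ ω) ^ 4)))
      = c₂ + c₃ * ∫ ω, (ξ ω) ^ 4 := by
    have i2 : Integrable (fun ω => c₂ * (ξ ω) ^ 2 + c₃ * (ξ ω) ^ 4) :=
      (hint2.const_mul c₂).add (hint4.const_mul c₃)
    rw [integral_add (hint.const_mul c₁) i2,
      integral_add (hint2.const_mul c₂) (hint4.const_mul c₃),
      integral_const_mul, integral_const_mul, integral_const_mul, hmean, h2]
    ring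
  have hfinal : (2 * c - 3) / τ ≤ (ℙ A).toReal := by
    rw [hLHS, hind] at hmono
    have hc₂v : c₂ = 2 * (2 * c - 3) / τ := by
      rw [hc₂, hσ2]; field_simp; ring
    have hc₃v : c₃ = -((2 * c - 3) / τ ^ 2) := by
      rw [hc₃]
      have : σ ^ 4 = (σ ^ 2) ^ 2 := by ring
      rw [this, hσ2]; field_simp; ring
    rw [hc₂v, hc₃v] at hmono
    have hbound : (2 * c - 3) / τ ≤ 2 * (2 * c - 3) / τ + -((2 * c - 3) / τ ^ 2) * ∫ ω, (ξ ω) ^ 4 := by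
      have h1 : ((2 * c - 3) / τ ^ 2) * (∫ ω, (ξ ω) ^ 4) ≤ ((2 * c - 3) / τ ^ 2) * τ := by
        exact mul_le_mul_of_nonneg_left h4 (div_nonneg hK (by positivity))
      have h2' : ((2 * c - 3) / τ ^ 2) * τ = (2 * c - 3) / τ := by
        field_simp
      rw [h2'] at h1
      have : 2 * (2 * c - 3) / τ = (2 * c - 3) / τ + (2 * c - 3) / τ := by ring
      linarith
    linarith
  exact ENNReal.ofReal_le_of_le_toReal hfinal
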